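/- arXiv:2507.20639 — 2 statements merged into one kernel-verified Lean document; each statement's English description precedes it below -/
import Mathlib

section
/- Fix an integer k ≥ 3. Let E(q) = k + ∑_{i=1}^{k} (q^{i-1}-1)/(q^k - q^{i-1}) and B(q) = ∑_{i=0}^{k-1} n/(n-i) with n = (q^k-1)/(q-1). Then lim_{q→∞} (E(q) - B(q)) = 0 and lim_{q→∞} E(q)/B(q) = 1, where q ranges over integers ≥ 2. -/
open Filter

-- term of E tends to 0
lemma aux_term (k i : ℕ) (hik : i < k) :
    Tendsto (fun q : ℕ => ((q : ℝ) ^ i - 1) / ((q : ℝ) ^ k - (q : ℝ) ^ i))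
      atTop (nhds 0) := by
  have hkim : 1 ≤ k - i := by omega
  have hpow : Tendsto (fun q : ℕ => ((q : ℝ)) ^ (k - i)) atTop atTop :=
    (tendsto_pow_atTop (by omega)).comp tendsto_natCast_atTop_atTop
  have hub : Tendsto (fun q : ℕ => (1 : ℝ) / ((q : ℝ) ^ (k - i) - 1)) atTop (nhds 0) :=
    Tendsto.div_atTop tendsto_const_nhds (tendsto_atTop_add_const_right _ (-1) hpow)
  apply squeeze_zero' (g := fun q : ℕ => (1 : ℝ) / ((q : ℝ) ^ (k - i) - 1)) _ _ hub
  · filter_upwards [eventually_ge_atTop 2] with q hq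
    have hq1 : (1 : ℝ) < (q : ℝ) := by exact_mod_cast by omega
    have h1 : (1 : ℝ) ≤ (q : ℝ) ^ i := one_le_pow₀ hq1.le
    have h2 : (q : ℝ) ^ i < (q : ℝ) ^ k := pow_lt_pow_right₀ hq1 hik
    apply div_nonneg <;> linarith
  · filter_upwards [eventually_ge_atTop 2] with q hq
    have hq1 : (1 : ℝ) < (q : ℝ) := by exact_mod_cast by omega
    have h2 : (q : ℝ) ^ i < (q : ℝ) ^ k := pow_lt_pow_right₀ hq1 hik
    have h3 : (1 : ℝ) < (q : ℝ) ^ (k - i) := one_lt_pow₀ hq1 (by omega)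
    have hmul : (q : ℝ) ^ i * (q : ℝ) ^ (k - i) = (q : ℝ) ^ k := by
      rw [← pow_add]; congr 1; omega
    rw [div_le_div_iff₀ (by linarith) (by linarith)]
    nlinarith [one_le_pow₀ (a := (q:ℝ)) hq1.le (n := i)]

lemma aux_N (k : ℕ) (hk : 3 ≤ k) :
    Tendsto (fun q : ℕ => ((q : ℝ) ^ k - 1) / ((q : ℝ) - 1)) atTop atTop := by
  apply tendsto_atTop_mono' atTop _ tendsto_natCast_atTop_atTop
  filter_upwards [eventually_ge_atTop 2] with q hq
  have hq2 : (2 : ℝ) ≤ (q : ℝ) := by exact_mod_cast hq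
  have h3 : (q : ℝ) ^ 3 ≤ (q : ℝ) ^ k := pow_le_pow_right₀ (by linarith) hk
  rw [le_div_iff₀ (by linarith)]
  nlinarith [mul_nonneg (mul_nonneg (by linarith : (0:ℝ) ≤ (q:ℝ)) (by linarith : (0:ℝ) ≤ (q:ℝ))) (by linarith : (0:ℝ) ≤ (q:ℝ) - 2)]

lemma aux_one (c : ℝ) : Tendsto (fun x : ℝ => x / (x - c)) atTop (nhds 1) := by
  have h0 : Tendsto (fun x : ℝ => c / (x - c)) atTop (nhds 0) :=
    Tendsto.div_atTop tendsto_const_nhds (tendsto_atTop_add_const_right _ (-c) tendsto_id)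
  have h1 : Tendsto (fun x : ℝ => 1 + c / (x - c)) atTop (nhds 1) := by
    simpa using (tendsto_const_nhds (x := (1:ℝ)) (f := atTop)).add h0
  apply h1.congr'
  filter_upwards [eventually_gt_atTop c] with x hx
  have : x - c ≠ 0 := by linarith
  field_simp
  ring

/-- Fix `k ≥ 3`. With `E(q) = k + ∑_{i=1}^{k} (q^{i-1}-1)/(q^k - q^{i-1})`
(the expectation for the `q`-ary simplex code of dimension `k`) and
`B(q) = ∑_{i=0}^{k-1} n/(n-i)` where `n = (q^k-1)/(q-1)` (the MDS bound),
we have `E(q) - B(q) → 0` and `E(q)/B(q) → 1` as the integer `q → ∞`. -/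
theorem stmt14 (k : ℕ) (hk : 3 ≤ k)
    (E B : ℕ → ℝ)
    (hE : ∀ q : ℕ, E q =
      (k : ℝ) + ∑ i ∈ Finset.range k, ((q : ℝ) ^ i - 1) / ((q : ℝ) ^ k - (q : ℝ) ^ i))
    (hB : ∀ q : ℕ, B q =
      ∑ i ∈ Finset.range k,
        (((q : ℝ) ^ k - 1) / ((q : ℝ) - 1)) /
          (((q : ℝ) ^ k - 1) / ((q : ℝ) - 1) - (i : ℝ))) :
    Tendsto (fun q : ℕ => E q - B q) atTop (nhds 0) ∧
      Tendsto (fun q : ℕ => E q / B q) atTop (nhds 1) := by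
  have hE' : Tendsto E atTop (nhds k) := by
    have hsum : Tendsto (fun q : ℕ => ∑ i ∈ Finset.range k,
        ((q : ℝ) ^ i - 1) / ((q : ℝ) ^ k - (q : ℝ) ^ i)) atTop (nhds 0) := by
      have := tendsto_finset_sum (Finset.range k)
        (fun i hi => aux_term k i (Finset.mem_range.mp hi))
      simpa using this
    have := (tendsto_const_nhds (x := (k:ℝ)) (f := atTop (α := ℕ))).add hsum
    simp only [add_zero] at this
    exact this.congr fun q => (hE q).symm
  have hB' : Tendsto B atTop (nhds k) := by
    have hone : ∀ i : ℕ, Tendsto (fun q : ℕ =>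
        (((q : ℝ) ^ k - 1) / ((q : ℝ) - 1)) /
          (((q : ℝ) ^ k - 1) / ((q : ℝ) - 1) - (i : ℝ))) atTop (nhds 1) :=
      fun i => (aux_one (i : ℝ)).comp (aux_N k hk)
    have := tendsto_finset_sum (Finset.range k) (fun i _ => hone i)
    simp only [Finset.sum_const, Finset.card_range, nsmul_eq_mul, mul_one] at this
    exact this.congr fun q => (hB q).symm
  have hk0 : (k : ℝ) ≠ 0 := by positivity
  constructor
  · simpa using hE'.sub hB'
  · have := hE'.div hB' hk0
    rw [div_self hk0] at this
    exact this
end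

section
/- Fix an integer q ≥ 2. Then lim_{k→∞} ( (k + ∑_{i=1}^{k} (q^{i-1}-1)/(q^k - q^{i-1})) - ∑_{i=0}^{k-1} n_k/(n_k - i) ) = ∑_{i=1}^{∞} 1/(q^i - 1), where n_k = (q^k-1)/(q-1). -/
open Filter

lemma two_mul_le_two_pow : ∀ k : ℕ, 2 * k ≤ 2 ^ k := by
  intro k
  induction k with
  | zero => norm_num
  | succ n ih =>
    rcases Nat.eq_zero_or_pos n with h | h
    · subst h; norm_num
    · have h2 : 2 ≤ 2 ^ n := by
        calc 2 = 2 * 1 := by norm_num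
        _ ≤ 2 * n := by omega
        _ ≤ 2 ^ n := ih
      calc 2 * (n + 1) = 2 * n + 2 := by ring
      _ ≤ 2 ^ n + 2 ^ n := by omega
      _ = 2 ^ (n + 1) := by ring

/-- Fix an integer `q ≥ 2`. Then, as `k → ∞`, the difference between the
expectation for the `q`-ary simplex code of dimension `k`, namely
`k + ∑_{i=1}^{k} (q^{i-1}-1)/(q^k - q^{i-1})`, and the MDS bound
`∑_{i=0}^{k-1} n_k/(n_k - i)` with `n_k = (q^k-1)/(q-1)`, tends to
`∑_{i=1}^{∞} 1/(q^i - 1)`. -/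
theorem stmt15 (q : ℕ) (hq : 2 ≤ q) :
    Tendsto
      (fun k : ℕ =>
        ((k : ℝ) + ∑ i ∈ Finset.range k, ((q : ℝ) ^ i - 1) / ((q : ℝ) ^ k - (q : ℝ) ^ i)) -
          ∑ i ∈ Finset.range k,
            (((q : ℝ) ^ k - 1) / ((q : ℝ) - 1)) /
              (((q : ℝ) ^ k - 1) / ((q : ℝ) - 1) - (i : ℝ)))
      atTop (nhds (∑' i : ℕ, 1 / ((q : ℝ) ^ (i + 1) - 1))) := by
  have hq2 : (2:ℝ) ≤ (q:ℝ) := by exact_mod_cast hq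
  have hq1 : (1:ℝ) < (q:ℝ) := by linarith
  have hq0 : (0:ℝ) < (q:ℝ) := by linarith
  -- basic bounds
  have h2pow : ∀ m : ℕ, (2:ℝ)^m ≤ (q:ℝ)^m := fun m =>
    pow_le_pow_left₀ (by norm_num) hq2 m
  have hpow_pos : ∀ m : ℕ, (0:ℝ) < (q:ℝ)^m := fun m => pow_pos hq0 m
  have h2pow_pos : ∀ m : ℕ, (0:ℝ) < (2:ℝ)^m := fun m => pow_pos (by norm_num) m
  have hhalf : ∀ m : ℕ, (q:ℝ)^(m+1)/2 ≤ (q:ℝ)^(m+1) - 1 := by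
    intro m
    have h1 : (2:ℝ) ≤ (2:ℝ)^(m+1) := by
      calc (2:ℝ) = 2^1 := by norm_num
      _ ≤ 2^(m+1) := by
        apply pow_le_pow_right₀ (by norm_num); omega
    have := h2pow (m+1)
    linarith
  have hden_pos : ∀ m : ℕ, (0:ℝ) < (q:ℝ)^(m+1) - 1 := by
    intro m
    have := hhalf m
    have := hpow_pos (m+1)
    linarith
  set f : ℕ → ℝ := fun i => 1 / ((q:ℝ)^(i+1) - 1) with hf
  -- summability
  have hsum : Summable f := by
    apply Summable.of_nonneg_of_le (fun i => le_of_lt (div_pos one_pos (hden_pos i)))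
      (fun i => ?_) (summable_geometric_of_lt_one (r := 1/2) (by norm_num) (by norm_num))
    show (1:ℝ) / ((q:ℝ)^(i+1) - 1) ≤ (1/2)^i
    have h1 : (2:ℝ)^i ≤ (q:ℝ)^(i+1) - 1 := by
      have := hhalf i
      have h2 : (2:ℝ)^i ≤ (q:ℝ)^(i+1)/2 := by
        have : (2:ℝ)^(i+1) ≤ (q:ℝ)^(i+1) := h2pow (i+1)
        have h3 : (2:ℝ)^(i+1) = 2 * 2^i := by ring
        linarith
      linarith
    rw [div_le_iff₀ (hden_pos i)]
    have h4 : ((1:ℝ)/2)^i * (2:ℝ)^i = 1 := by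
      rw [← mul_pow]; norm_num
    calc (1:ℝ) = (1/2)^i * (2:ℝ)^i := h4.symm
    _ ≤ (1/2)^i * ((q:ℝ)^(i+1) - 1) := by
        apply mul_le_mul_of_nonneg_left h1 (by positivity)
  -- the error terms
  set A : ℕ → ℝ := fun k => ∑ i ∈ Finset.range k,
      (q:ℝ)^(i+1) / ((q:ℝ)^k * ((q:ℝ)^(i+1) - 1)) with hA
  set B : ℕ → ℝ := fun k => ∑ i ∈ Finset.range k,
      (i:ℝ) / ((((q:ℝ)^k - 1)/((q:ℝ)-1)) - (i:ℝ)) with hB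
  have hN : ∀ k : ℕ, ((q:ℝ)^k - 1)/((q:ℝ)-1) = ∑ i ∈ Finset.range k, (q:ℝ)^i := by
    intro k; rw [geom_sum_eq (by linarith) k]
  have hNge : ∀ k : ℕ, ∀ i : ℕ, i < k →
      (i:ℝ) + 1 ≤ ((q:ℝ)^k - 1)/((q:ℝ)-1) := by
    intro k i hik
    rw [hN k]
    calc (i:ℝ) + 1 ≤ (k:ℝ) := by exact_mod_cast Nat.succ_le_of_lt hik
    _ = ∑ j ∈ Finset.range k, (1:ℝ) := by simp
    _ ≤ ∑ j ∈ Finset.range k, (q:ℝ)^j := by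
        apply Finset.sum_le_sum
        intro j _
        exact one_le_pow₀ hq1.le
  have hN2 : ∀ k : ℕ, (2:ℝ)^k - 1 ≤ ((q:ℝ)^k - 1)/((q:ℝ)-1) := by
    intro k
    rw [hN k]
    have h5 : ((2:ℝ)^k - 1)/((2:ℝ)-1) = ∑ i ∈ Finset.range k, (2:ℝ)^i :=
      (geom_sum_eq (by norm_num) k).symm
    rw [show (2:ℝ)^k - 1 = ((2:ℝ)^k - 1)/((2:ℝ)-1) by norm_num, h5]
    exact Finset.sum_le_sum fun i _ => h2pow i
  -- pointwise identity
  have key : ∀ k : ℕ,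
      ((k : ℝ) + ∑ i ∈ Finset.range k, ((q : ℝ) ^ i - 1) / ((q : ℝ) ^ k - (q : ℝ) ^ i)) -
          ∑ i ∈ Finset.range k,
            (((q : ℝ) ^ k - 1) / ((q : ℝ) - 1)) /
              (((q : ℝ) ^ k - 1) / ((q : ℝ) - 1) - (i : ℝ))
        = (∑ i ∈ Finset.range k, f i) - A k - B k := by
    intro k
    have h1 : ((k : ℝ) + ∑ i ∈ Finset.range k, ((q : ℝ) ^ i - 1) / ((q : ℝ) ^ k - (q : ℝ) ^ i))
        = ∑ i ∈ Finset.range k, (1 + ((q:ℝ)^i - 1) / ((q:ℝ)^k - (q:ℝ)^i)) := by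
      rw [Finset.sum_add_distrib]
      simp
    have h2 : ∀ i ∈ Finset.range k,
        (1 + ((q:ℝ)^i - 1) / ((q:ℝ)^k - (q:ℝ)^i))
          = ((q:ℝ)^k - 1) / ((q:ℝ)^k - (q:ℝ)^i) := by
      intro i hi
      have hik : i < k := Finset.mem_range.mp hi
      have hlt : (q:ℝ)^i < (q:ℝ)^k := pow_lt_pow_right₀ hq1 hik
      have hne : (q:ℝ)^k - (q:ℝ)^i ≠ 0 := by linarith
      field_simp
      ring
    have h3 : ∑ i ∈ Finset.range k, ((q:ℝ)^k - 1) / ((q:ℝ)^k - (q:ℝ)^i)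
        = ∑ i ∈ Finset.range k,
            (1 + (f i - (q:ℝ)^(i+1) / ((q:ℝ)^k * ((q:ℝ)^(i+1) - 1)))) := by
      rw [← Finset.sum_range_reflect (fun i => ((q:ℝ)^k - 1) / ((q:ℝ)^k - (q:ℝ)^i)) k]
      apply Finset.sum_congr rfl
      intro i hi
      have hik : i < k := Finset.mem_range.mp hi
      have hab : (q:ℝ)^(k-1-i) * (q:ℝ)^(i+1) = (q:ℝ)^k := by
        rw [← pow_add]; congr 1; omega
      set a := (q:ℝ)^(k-1-i) with ha'
      set b := (q:ℝ)^(i+1) with hb'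
      have ha : (0:ℝ) < a := hpow_pos _
      have hb1 : (0:ℝ) < b - 1 := hden_pos i
      show ((q:ℝ)^k - 1) / ((q:ℝ)^k - a) = 1 + (1 / (b - 1) - b / ((q:ℝ)^k * (b - 1)))
      rw [← hab]
      have hd1 : a * b - a ≠ 0 := by nlinarith
      have hd2 : b - 1 ≠ 0 := ne_of_gt hb1
      have hd3 : a * b ≠ 0 := by positivity
      have hb0 : b ≠ 0 := by linarith
      field_simp
      ring
    have h4 : ∑ i ∈ Finset.range k,
          (((q : ℝ) ^ k - 1) / ((q : ℝ) - 1)) / (((q : ℝ) ^ k - 1) / ((q : ℝ) - 1) - (i : ℝ))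
        = ∑ i ∈ Finset.range k,
            (1 + (i:ℝ) / ((((q:ℝ)^k - 1)/((q:ℝ)-1)) - (i:ℝ))) := by
      apply Finset.sum_congr rfl
      intro i hi
      have hik : i < k := Finset.mem_range.mp hi
      have := hNge k i hik
      have hne : (((q:ℝ)^k - 1)/((q:ℝ)-1)) - (i:ℝ) ≠ 0 := by linarith
      field_simp
      ring
    rw [h1, Finset.sum_congr rfl h2, h3, h4, hA, hB]
    simp only [Finset.sum_add_distrib, Finset.sum_sub_distrib]
    ring
  -- limits
  have hL : Tendsto (fun k => ∑ i ∈ Finset.range k, f i) atTop (nhds (∑' i, f i)) :=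
    hsum.hasSum.tendsto_sum_nat
  have hbound2 : ∀ k : ℕ, (2:ℝ) * k ≤ (2:ℝ)^k := by
    intro k; exact_mod_cast two_mul_le_two_pow k
  have hA0 : Tendsto A atTop (nhds 0) := by
    have hup : Tendsto (fun k : ℕ => 2 * ((k:ℝ) * (1/2)^k)) atTop (nhds 0) := by
      have := (tendsto_self_mul_const_pow_of_lt_one (r := 1/2) (by norm_num)
        (by norm_num)).const_mul (2:ℝ)
      simpa using this
    apply tendsto_of_tendsto_of_tendsto_of_le_of_le tendsto_const_nhds hup
    · intro k
      apply Finset.sum_nonneg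
      intro i _
      have h6 := hden_pos i
      have h7 := hpow_pos k
      have h8 := hpow_pos (i+1)
      positivity
    · intro k
      have hterm : ∀ i ∈ Finset.range k,
          (q:ℝ)^(i+1) / ((q:ℝ)^k * ((q:ℝ)^(i+1) - 1)) ≤ 2 * (1/2)^k := by
        intro i _
        have hd : (0:ℝ) < (q:ℝ)^k * ((q:ℝ)^(i+1) - 1) :=
          mul_pos (hpow_pos k) (hden_pos i)
        rw [div_le_iff₀ hd]
        have e1 : ((1:ℝ)/2)^k = 1 / 2^k := by rw [div_pow]; norm_num
        rw [e1]
        have h2k := h2pow k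
        have hh := hhalf i
        have hp1 := hpow_pos (i+1)
        have hpk := hpow_pos k
        have h2kp := h2pow_pos k
        have step : (q:ℝ)^(i+1) ≤ 2 * (1 / 2^k) * (2^k * ((q:ℝ)^(i+1)/2)) := by
          have heq : 2 * ((1:ℝ) / 2^k) * (2^k * ((q:ℝ)^(i+1)/2)) = (q:ℝ)^(i+1) := by
            field_simp
          linarith [heq.ge]
        calc (q:ℝ)^(i+1) ≤ 2 * (1 / 2^k) * (2^k * ((q:ℝ)^(i+1)/2)) := step
        _ ≤ 2 * (1 / 2^k) * ((q:ℝ)^k * ((q:ℝ)^(i+1) - 1)) := by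
            apply mul_le_mul_of_nonneg_left _ (by positivity)
            have h9 : (2:ℝ)^k * ((q:ℝ)^(i+1)/2) ≤ (q:ℝ)^k * ((q:ℝ)^(i+1)/2) := by
              apply mul_le_mul_of_nonneg_right h2k (by positivity)
            have h10 : (q:ℝ)^k * ((q:ℝ)^(i+1)/2) ≤ (q:ℝ)^k * ((q:ℝ)^(i+1) - 1) := by
              apply mul_le_mul_of_nonneg_left hh (le_of_lt hpk)
            linarith
      calc A k ≤ ∑ i ∈ Finset.range k, 2 * ((1:ℝ)/2)^k := Finset.sum_le_sum hterm
      _ = (k:ℝ) * (2 * (1/2)^k) := by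
          rw [Finset.sum_const, Finset.card_range, nsmul_eq_mul]
      _ = 2 * ((k:ℝ) * (1/2)^k) := by ring
  have hB0 : Tendsto B atTop (nhds 0) := by
    have hup : Tendsto (fun k : ℕ => 2 * ((k:ℝ)^2 * (1/2)^k)) atTop (nhds 0) := by
      have := (tendsto_pow_const_mul_const_pow_of_lt_one 2 (r := 1/2) (by norm_num)
        (by norm_num)).const_mul (2:ℝ)
      simpa using this
    apply tendsto_of_tendsto_of_tendsto_of_le_of_le tendsto_const_nhds hup
    · intro k
      apply Finset.sum_nonneg
      intro i hi
      have hik : i < k := Finset.mem_range.mp hi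
      have := hNge k i hik
      have hNi : (0:ℝ) < (((q:ℝ)^k - 1)/((q:ℝ)-1)) - (i:ℝ) := by linarith
      positivity
    · intro k
      have hNlb : ∀ i ∈ Finset.range k,
          (2:ℝ)^k / 2 ≤ (((q:ℝ)^k - 1)/((q:ℝ)-1)) - (i:ℝ) := by
        intro i hi
        have hik : i < k := Finset.mem_range.mp hi
        have h1 : (i:ℝ) ≤ (k:ℝ) - 1 := by
          have : (i:ℝ) + 1 ≤ (k:ℝ) := by exact_mod_cast Nat.succ_le_of_lt hik
          linarith
        have h2 := hN2 k
        have h3 := hbound2 k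
        linarith
      have hterm : ∀ i ∈ Finset.range k,
          (i:ℝ) / ((((q:ℝ)^k - 1)/((q:ℝ)-1)) - (i:ℝ)) ≤ 2 * (k:ℝ) * (1/2)^k := by
        intro i hi
        have hik : i < k := Finset.mem_range.mp hi
        have hNi := hNlb i hi
        have hpos : (0:ℝ) < (2:ℝ)^k / 2 := by positivity
        have hik' : (i:ℝ) ≤ (k:ℝ) := by exact_mod_cast hik.le
        calc (i:ℝ) / ((((q:ℝ)^k - 1)/((q:ℝ)-1)) - (i:ℝ))
            ≤ (k:ℝ) / ((2:ℝ)^k / 2) := by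
              apply div_le_div₀ (by positivity) hik' hpos hNi
        _ = 2 * (k:ℝ) * (1/2)^k := by
              have e1 : ((1:ℝ)/2)^k = 1 / 2^k := by rw [div_pow]; norm_num
              rw [e1]
              field_simp
      calc B k ≤ ∑ i ∈ Finset.range k, 2 * (k:ℝ) * ((1:ℝ)/2)^k := Finset.sum_le_sum hterm
      _ = (k:ℝ) * (2 * (k:ℝ) * (1/2)^k) := by
          rw [Finset.sum_const, Finset.card_range, nsmul_eq_mul]
      _ = 2 * ((k:ℝ)^2 * (1/2)^k) := by ring
  have hfinal : Tendsto (fun k => (∑ i ∈ Finset.range k, f i) - A k - B k)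
      atTop (nhds ((∑' i, f i) - 0 - 0)) := (hL.sub hA0).sub hB0
  rw [sub_zero, sub_zero] at hfinal
  exact hfinal.congr fun k => (key k).symm
end
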